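/- If G contains a complete bipartite subgraph K_{p,q} with sides A (|A| = p) and B (|B| = q), and p is strictly greater than the tree-width of G, then adding all edges between pairs of vertices of B does not increase the tree-width of G: the augmented graph has the same tree-width as G. -/

import Mathlib

/-- `B : Fin m → Finset V` is a path decomposition of `G`: every vertex is in some
bag, every edge is contained in some bag, and each vertex's bags form an interval. -/
def IsPathDecomp {V : Type} (G : SimpleGraph V) {m : ℕ} (B : Fin m → Finset V) : Prop :=
  (∀ v : V, ∃ i, v ∈ B i) ∧
  (∀ u v : V, G.Adj u v → ∃ i, u ∈ B i ∧ v ∈ B i) ∧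
  (∀ (v : V) (i j l : Fin m), i ≤ j → j ≤ l → v ∈ B i → v ∈ B l → v ∈ B j)

/-- The path-width of `G`: the least `k` such that `G` has a path decomposition
all of whose bags have at most `k + 1` vertices. -/
noncomputable def pathwidth {V : Type} (G : SimpleGraph V) : ℕ :=
  sInf {k | ∃ (m : ℕ) (B : Fin m → Finset V),
    IsPathDecomp G B ∧ ∀ i, (B i).card ≤ k + 1}

/-- `(T, B)` is a tree decomposition of `G`: `T` is a tree, every vertex is in some
bag, every edge is contained in some bag, and each vertex's bags induce a subtree
(a connected subgraph) of `T`. -/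
def IsTreeDecomp {V I : Type} (G : SimpleGraph V) (T : SimpleGraph I) (B : I → Finset V) : Prop :=
  T.IsTree ∧
  (∀ v : V, ∃ i, v ∈ B i) ∧
  (∀ u v : V, G.Adj u v → ∃ i, u ∈ B i ∧ v ∈ B i) ∧
  (∀ v : V, (T.induce {i : I | v ∈ B i}).Connected)

/-- The tree-width of `G`: the least `k` such that `G` has a tree decomposition
all of whose bags have at most `k + 1` vertices. -/
noncomputable def treewidth {V : Type} (G : SimpleGraph V) : ℕ :=
  sInf {k | ∃ (I : Type) (T : SimpleGraph I) (B : I → Finset V),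
    IsTreeDecomp G T B ∧ ∀ i, (B i).card ≤ k + 1}

namespace TreewidthAux

open SimpleGraph

variable {I : Type} {T : SimpleGraph I}

lemma reach_induce {S : Set I} : ∀ {u v : I} (W : T.Walk u v),
    (∀ w ∈ W.support, w ∈ S) → ∀ (hu : u ∈ S) (hv : v ∈ S),
    (T.induce S).Reachable ⟨u, hu⟩ ⟨v, hv⟩ := by
  intro u v W
  induction W with
  | nil => intro _ hu hv; exact Reachable.refl _
  | @cons u m v h p ih =>
    intro hsub hu hv
    have hm : m ∈ S := hsub m (by simp)
    have hadj : (T.induce S).Adj ⟨u, hu⟩ ⟨m, hm⟩ := by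
      simp only [comap_adj, Function.Embedding.coe_subtype]
      exact h
    exact hadj.reachable.trans (ih (fun w hw => hsub w (by simp [hw])) hm hv)

lemma walk_of_induce {S : Set I} (hS : (T.induce S).Connected) {u v : I}
    (hu : u ∈ S) (hv : v ∈ S) : ∃ W : T.Walk u v, ∀ w ∈ W.support, w ∈ S := by
  obtain ⟨Q⟩ := hS.preconnected ⟨u, hu⟩ ⟨v, hv⟩
  refine ⟨Q.map (SimpleGraph.Embedding.induce S).toHom, ?_⟩
  intro w hw
  have hw' : w ∈ Q.support.map (SimpleGraph.Embedding.induce (G := T) S).toHom := by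
    rw [← SimpleGraph.Walk.support_map]; exact hw
  rw [List.mem_map] at hw'
  obtain ⟨a, _, rfl⟩ := hw'
  exact a.2

lemma path_support_in (hT : T.IsTree) {S : Set I} (hS : (T.induce S).Connected)
    {u v : I} (hu : u ∈ S) (hv : v ∈ S) (P : T.Walk u v) (hP : P.IsPath) :
    ∀ w ∈ P.support, w ∈ S := by
  classical
  obtain ⟨W, hW⟩ := walk_of_induce hS hu hv
  have heq : P = W.bypass := (hT.existsUnique_path u v).unique hP W.bypass_isPath
  rw [heq]
  exact fun w hw => hW w (W.support_bypass_subset hw)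

lemma not_reachable_delete (hT : T.IsTree) {x y : I} {P : T.Walk x y}
    (hP : P.IsPath) {e : Sym2 I} (he : e ∈ P.edges) :
    ¬ (T.deleteEdges {e}).Reachable x y := by
  classical
  rintro ⟨W⟩
  have hedges : ∀ e' ∈ W.bypass.edges, e' ∈ T.edgeSet := by
    intro e' h'
    have := W.bypass.edges_subset_edgeSet h'
    rw [edgeSet_deleteEdges] at this
    exact this.1
  have htr : (W.bypass.transfer T hedges).IsPath := W.bypass_isPath.transfer _
  have heq : W.bypass.transfer T hedges = P := (hT.existsUnique_path x y).unique htr hP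
  have hmem : e ∈ (W.bypass.transfer T hedges).edges := heq ▸ he
  rw [SimpleGraph.Walk.edges_transfer] at hmem
  have := W.bypass.edges_subset_edgeSet hmem
  rw [edgeSet_deleteEdges] at this
  exact this.2 rfl

lemma crossing {S : Set I} : ∀ {u v : I} (W : T.Walk u v), u ∈ S → v ∉ S →
    ∃ t1 t2, t1 ∈ S ∧ t2 ∉ S ∧ s(t1, t2) ∈ W.edges := by
  intro u v W
  induction W with
  | nil => intro h h'; exact absurd h h'
  | @cons u m v h p ih =>
    intro hu hv
    by_cases hm : m ∈ S
    · obtain ⟨t1, t2, h1, h2, he⟩ := ih hm hv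
      exact ⟨t1, t2, h1, h2, by simp [he]⟩
    · exact ⟨u, m, hu, hm, by simp⟩

lemma sep (hT : T.IsTree) {S S' : Set I} (hS : (T.induce S).Connected)
    (hS' : (T.induce S').Connected) (hSne : S.Nonempty) (hS'ne : S'.Nonempty)
    (hd : Disjoint S S') :
    ∃ t1 t2, t1 ∈ S ∧ t2 ∉ S ∧ ∀ W : Set I, (T.induce W).Connected →
      (W ∩ S).Nonempty → (W ∩ S').Nonempty → t1 ∈ W ∧ t2 ∈ W := by
  obtain ⟨x, hx⟩ := hSne
  obtain ⟨y, hy⟩ := hS'ne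
  obtain ⟨P, hP, -⟩ := hT.existsUnique_path x y
  have hyS : y ∉ S := fun h => (Set.disjoint_left.mp hd h) hy
  obtain ⟨t1, t2, h1S, h2S, he⟩ := crossing P hx hyS
  refine ⟨t1, t2, h1S, h2S, ?_⟩
  rintro W hWc ⟨w1, hw1W, hw1S⟩ ⟨w2, hw2W, hw2S⟩
  obtain ⟨WW, hWW⟩ := walk_of_induce hWc hw1W hw2W
  have hcross : s(t1, t2) ∈ WW.edges := by
    by_contra hnot
    have r1 : (T.deleteEdges {s(t1,t2)}).Reachable w1 w2 :=
      ⟨WW.toDeleteEdges _ (fun e' he' hmem => hnot (Set.mem_singleton_iff.mp hmem ▸ he'))⟩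
    obtain ⟨Q, hQ⟩ := walk_of_induce hS hw1S hx
    have hQe : ∀ e' ∈ Q.edges, e' ∉ ({s(t1,t2)} : Set (Sym2 I)) := by
      intro e' he' hmem
      rw [Set.mem_singleton_iff] at hmem
      subst hmem
      exact h2S (hQ t2 (Q.snd_mem_support_of_mem_edges he'))
    have r2 : (T.deleteEdges {s(t1,t2)}).Reachable w1 x := ⟨Q.toDeleteEdges _ hQe⟩
    obtain ⟨R, hR⟩ := walk_of_induce hS' hw2S hy
    have hRe : ∀ e' ∈ R.edges, e' ∉ ({s(t1,t2)} : Set (Sym2 I)) := by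
      intro e' he' hmem
      rw [Set.mem_singleton_iff] at hmem
      subst hmem
      exact (Set.disjoint_left.mp hd h1S) (hR t1 (R.fst_mem_support_of_mem_edges he'))
    have r3 : (T.deleteEdges {s(t1,t2)}).Reachable w2 y := ⟨R.toDeleteEdges _ hRe⟩
    exact not_reachable_delete hT hP he (r2.symm.trans (r1.trans r3))
  exact ⟨hWW t1 (WW.fst_mem_support_of_mem_edges hcross),
    hWW t2 (WW.snd_mem_support_of_mem_edges hcross)⟩

lemma inter_connected (hT : T.IsTree) {S S' : Set I} (hS : (T.induce S).Connected)
    (hS' : (T.induce S').Connected) (hne : (S ∩ S').Nonempty) :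
    (T.induce (S ∩ S')).Connected := by
  obtain ⟨x0, hx0⟩ := hne
  haveI : Nonempty ↥(S ∩ S') := ⟨⟨x0, hx0⟩⟩
  refine ⟨fun a b => ?_⟩
  obtain ⟨P, hP, -⟩ := hT.existsUnique_path a.1 b.1
  have h1 := path_support_in hT hS a.2.1 b.2.1 P hP
  have h2 := path_support_in hT hS' a.2.2 b.2.2 P hP
  exact reach_induce P (fun w hw => Set.mem_inter (h1 w hw) (h2 w hw)) a.2 b.2

lemma helly3 (hT : T.IsTree) {S0 S1 S2 : Set I} (h0 : (T.induce S0).Connected)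
    (h1 : (T.induce S1).Connected) (h2 : (T.induce S2).Connected)
    (h01 : (S0 ∩ S1).Nonempty) (h02 : (S0 ∩ S2).Nonempty) (h12 : (S1 ∩ S2).Nonempty) :
    ((S0 ∩ S1) ∩ S2).Nonempty := by
  by_contra hcon
  have hd : Disjoint (S0 ∩ S1) S2 := by
    rw [Set.not_nonempty_iff_eq_empty] at hcon
    exact Set.disjoint_iff_inter_eq_empty.mpr hcon
  obtain ⟨t1, t2, ht1, ht2, hW⟩ := sep hT (inter_connected hT h0 h1 h01) h2 h01
    ⟨h02.choose, h02.choose_spec.2⟩ hd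
  have hA := hW S0 h0 ⟨h01.choose, h01.choose_spec.1, h01.choose_spec⟩ h02
  have hB := hW S1 h1 ⟨h01.choose, h01.choose_spec.2, h01.choose_spec⟩ h12
  exact ht2 ⟨hA.2, hB.2⟩

theorem helly_list (hT : T.IsTree) (l : List (Set I))
    (hconn : ∀ S ∈ l, (T.induce S).Connected)
    (hpair : ∀ S ∈ l, ∀ S' ∈ l, (S ∩ S').Nonempty) (hne : l ≠ []) :
    ∃ i, ∀ S ∈ l, i ∈ S := by
  match l with
  | [] => exact absurd rfl hne
  | [S] =>
    obtain ⟨i, hi⟩ := hpair S (by simp) S (by simp)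
    exact ⟨i, by simpa using hi.1⟩
  | S0 :: S1 :: rest =>
    have h01 : (S0 ∩ S1).Nonempty := hpair S0 (by simp) S1 (by simp)
    have hc01 : (T.induce (S0 ∩ S1)).Connected :=
      inter_connected hT (hconn S0 (by simp)) (hconn S1 (by simp)) h01
    obtain ⟨i, hi⟩ := helly_list hT ((S0 ∩ S1) :: rest)
      (by
        intro S hS
        rcases List.mem_cons.mp hS with rfl | hS
        · exact hc01
        · exact hconn S (by simp [hS]))
      (by
        intro S hS S' hS'
        rcases List.mem_cons.mp hS with rfl | hS <;>
          rcases List.mem_cons.mp hS' with rfl | hS'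
        · exact ⟨h01.choose, h01.choose_spec, h01.choose_spec⟩
        · exact helly3 hT (hconn S0 (by simp)) (hconn S1 (by simp))
            (hconn S' (by simp [hS'])) h01 (hpair S0 (by simp) S' (by simp [hS']))
            (hpair S1 (by simp) S' (by simp [hS']))
        · have := helly3 hT (hconn S0 (by simp)) (hconn S1 (by simp))
            (hconn S (by simp [hS])) h01 (hpair S0 (by simp) S (by simp [hS]))
            (hpair S1 (by simp) S (by simp [hS]))
          obtain ⟨j, hj⟩ := this
          exact ⟨j, hj.2, hj.1⟩
        · exact hpair S (by simp [hS]) S' (by simp [hS']))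
      (by simp)
    have h0 : i ∈ S0 ∩ S1 := hi (S0 ∩ S1) (by simp)
    refine ⟨i, ?_⟩
    intro S hS
    rcases List.mem_cons.mp hS with rfl | hS
    · exact h0.1
    rcases List.mem_cons.mp hS with rfl | hS
    · exact h0.2
    · exact hi S (by simp [hS])
termination_by l.length

lemma exists_bag_superset {V : Type} {G : SimpleGraph V} {T : SimpleGraph I}
    {bag : I → Finset V} (hdec : IsTreeDecomp G T bag) {p k : ℕ} {A B : Finset V}
    (hA : A.card = p) (hdisj : Disjoint A B) (hbip : ∀ a ∈ A, ∀ b ∈ B, G.Adj a b)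
    (hsize : ∀ i, (bag i).card ≤ k + 1) (hkp : k < p) :
    ∃ i, ∀ b ∈ B, b ∈ bag i := by
  classical
  obtain ⟨htree, hcov, hedge, hconn⟩ := hdec
  set Sv : V → Set I := fun v => {i | v ∈ bag i} with hSv
  have hSne : ∀ v, (Sv v).Nonempty := fun v => hcov v
  have hpairwise : ∀ b1 ∈ B, ∀ b2 ∈ B, (Sv b1 ∩ Sv b2).Nonempty := by
    intro b1 hb1 b2 hb2
    by_contra hcon
    have hd : Disjoint (Sv b1) (Sv b2) := by
      rw [Set.not_nonempty_iff_eq_empty] at hcon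
      exact Set.disjoint_iff_inter_eq_empty.mpr hcon
    obtain ⟨t1, t2, ht1, ht2, hW⟩ := sep htree (hconn b1) (hconn b2) (hSne b1) (hSne b2) hd
    have hsub : insert b1 A ⊆ bag t1 := by
      intro x hx
      rcases Finset.mem_insert.mp hx with rfl | hx
      · exact ht1
      · have hm1 : (Sv x ∩ Sv b1).Nonempty := by
          obtain ⟨i, hi1, hi2⟩ := hedge x b1 (hbip x hx b1 hb1)
          exact ⟨i, hi1, hi2⟩
        have hm2 : (Sv x ∩ Sv b2).Nonempty := by
          obtain ⟨i, hi1, hi2⟩ := hedge x b2 (hbip x hx b2 hb2)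
          exact ⟨i, hi1, hi2⟩
        exact (hW (Sv x) (hconn x) hm1 hm2).1
    have hcard := Finset.card_le_card hsub
    have hb1A : b1 ∉ A := fun h => (Finset.disjoint_left.mp hdisj h) hb1
    rw [Finset.card_insert_of_notMem hb1A, hA] at hcard
    have := hsize t1
    omega
  rcases B.eq_empty_or_nonempty with rfl | hBne
  · obtain ⟨i0⟩ := htree.isConnected.nonempty
    exact ⟨i0, by simp⟩
  obtain ⟨i, hi⟩ := helly_list htree (B.toList.map Sv)
    (by
      intro S hS
      obtain ⟨b, _, rfl⟩ := List.mem_map.mp hS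
      exact hconn b)
    (by
      intro S hS S' hS'
      obtain ⟨b, hb, rfl⟩ := List.mem_map.mp hS
      obtain ⟨b', hb', rfl⟩ := List.mem_map.mp hS'
      exact hpairwise b (Finset.mem_toList.mp hb) b' (Finset.mem_toList.mp hb'))
    (by simp [Finset.toList_eq_nil, hBne.ne_empty])
  exact ⟨i, fun b hb => hi (Sv b) (List.mem_map.mpr ⟨b, Finset.mem_toList.mpr hb, rfl⟩)⟩

lemma trivial_decomp {V : Type} [Fintype V] (G : SimpleGraph V) :
    Fintype.card V ∈ {k | ∃ (I : Type) (T : SimpleGraph I) (B : I → Finset V),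
      IsTreeDecomp G T B ∧ ∀ i, (B i).card ≤ k + 1} := by
  refine ⟨Unit, ⊥, fun _ => Finset.univ, ⟨⟨?_, ?_⟩, ?_, ?_, ?_⟩, ?_⟩
  · exact ⟨fun a b => by rw [Subsingleton.elim a b]⟩
  · intro v c hc
    cases c with
    | nil => exact hc.ne_nil rfl
    | cons h p => simp at h
  · exact fun v => ⟨(), Finset.mem_univ v⟩
  · exact fun u v _ => ⟨(), Finset.mem_univ u, Finset.mem_univ v⟩
  · intro v
    haveI : Nonempty ↥{i : Unit | v ∈ (Finset.univ : Finset V)} :=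
      ⟨⟨(), by simp⟩⟩
    exact ⟨fun a b => by rw [Subsingleton.elim a b]⟩
  · intro i
    exact (Finset.card_le_univ _).trans (by simp)

end TreewidthAux

/-- If `G` contains `K_{p,q}` with sides `A`, `B` and `p` exceeds the tree-width of
`G`, then adding all edges between vertices of `B` does not change the tree-width. -/
theorem treewidth_augment_eq (V : Type) [Fintype V] (G : SimpleGraph V)
    (p q : ℕ) (A B : Finset V) (hA : A.card = p) (hB : B.card = q)
    (hdisj : Disjoint A B) (hbip : ∀ a ∈ A, ∀ b ∈ B, G.Adj a b)
    (hp : treewidth G < p) :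
    treewidth (SimpleGraph.fromRel (fun u v => G.Adj u v ∨ (u ∈ B ∧ v ∈ B))) =
      treewidth G := by
  classical
  set Aug := SimpleGraph.fromRel (fun u v => G.Adj u v ∨ (u ∈ B ∧ v ∈ B)) with hAugdef
  set SG := {k | ∃ (I : Type) (T : SimpleGraph I) (Bg : I → Finset V),
    IsTreeDecomp G T Bg ∧ ∀ i, (Bg i).card ≤ k + 1} with hSGdef
  set SA := {k | ∃ (I : Type) (T : SimpleGraph I) (Bg : I → Finset V),
    IsTreeDecomp Aug T Bg ∧ ∀ i, (Bg i).card ≤ k + 1} with hSAdef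
  have hSGne : SG.Nonempty := ⟨_, TreewidthAux.trivial_decomp G⟩
  have hSAne : SA.Nonempty := ⟨_, TreewidthAux.trivial_decomp Aug⟩
  have hsub : SA ⊆ SG := by
    rintro k ⟨I, T, Bg, ⟨htree, hcov, hedge, hconn⟩, hsize⟩
    refine ⟨I, T, Bg, ⟨htree, hcov, ?_, hconn⟩, hsize⟩
    intro u v huv
    refine hedge u v ?_
    rw [hAugdef, SimpleGraph.fromRel_adj]
    exact ⟨huv.ne, Or.inl (Or.inl huv)⟩
  have htwG : treewidth G = sInf SG := rfl
  have htwA : treewidth Aug = sInf SA := rfl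
  have h1 : treewidth G ≤ treewidth Aug := by
    rw [htwG, htwA]
    exact Nat.sInf_le (hsub (Nat.sInf_mem hSAne))
  have hkmem : treewidth G ∈ SG := by
    rw [htwG]; exact Nat.sInf_mem hSGne
  obtain ⟨I0, T0, bag0, hdec0, hsize0⟩ := hkmem
  obtain ⟨i0, hi0⟩ := TreewidthAux.exists_bag_superset hdec0 hA hdisj hbip hsize0 hp
  have h2 : treewidth Aug ≤ treewidth G := by
    rw [htwA]
    refine Nat.sInf_le ?_
    refine ⟨I0, T0, bag0, ⟨hdec0.1, hdec0.2.1, ?_, hdec0.2.2.2⟩, hsize0⟩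
    intro u v huv
    rw [hAugdef, SimpleGraph.fromRel_adj] at huv
    obtain ⟨hne, h⟩ := huv
    rcases h with (hGuv | ⟨hu, hv⟩) | (hGvu | ⟨hv, hu⟩)
    · exact hdec0.2.2.1 u v hGuv
    · exact ⟨i0, hi0 u hu, hi0 v hv⟩
    · obtain ⟨i, ha, hb⟩ := hdec0.2.2.1 v u hGvu
      exact ⟨i, hb, ha⟩
    · exact ⟨i0, hi0 u hu, hi0 v hv⟩
  exact le_antisymm h2 h1
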